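/- (Corollary 7.1) Let M be a finite set of goods and let each of n agents i have a normalized monotone submodular valuation v_i : 2^M → ℝ and a p_i-system constraint I_i on M. Then there exists an allocation A = (A_1, …, A_n) of pairwise disjoint sets with A_i ∈ I_i for all i, such that: (1) for every pair of agents i, j with A_j ≠ ∅ there is some g ∈ A_j such that v_i(A_i) ≥ (1/(p_i + 2)) · v_i(A'_j) for every A'_j ⊆ A_j \ {g} with A'_j ∈ I_i (and v_i(A_i) ≥ (1/(p_i + 2)) · v_i(A'_j) for every A'_j ⊆ A_j with A'_j ∈ I_i when A_j = ∅); and (2) for every item g ∈ M \ (A_1 ∪ … ∪ A_n) and every agent i, A_i ∪ {g} ∉ I_i. -/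

import Mathlib

open Finset

/-- A set function on subsets of a finite ground set is submodular if the marginal value of any
item with respect to a smaller set is at least its marginal value with respect to a larger set. -/
def Submodular {α : Type*} [DecidableEq α] (f : Finset α → ℝ) : Prop :=
  ∀ ⦃S T : Finset α⦄, S ⊆ T → ∀ ⦃x : α⦄, x ∉ T →
    f (insert x T) - f T ≤ f (insert x S) - f S

/-- `A` is a basis of `S` w.r.t. the independence predicate `Indep`:
a maximal independent subset of `S`. -/
def IsBasisIn {α : Type*} [DecidableEq α] (Indep : Finset α → Prop) (S A : Finset α) : Prop :=
  A ⊆ S ∧ Indep A ∧ ∀ x ∈ S, x ∉ A → ¬ Indep (insert x A)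

section RR

variable {α : Type*} [DecidableEq α] [Fintype α] {n : ℕ}
variable (v : Fin n → Finset α → ℝ) (Indep : Fin n → Finset α → Prop)

open Classical in
noncomputable def rrFeas (i : Fin n) (A : Fin n → Finset α) : Finset α :=
  Finset.univ.filter fun g => (∀ j, g ∉ A j) ∧ Indep i (insert g (A i))

lemma mem_rrFeas {i : Fin n} {A : Fin n → Finset α} {g : α} :
    g ∈ rrFeas Indep i A ↔ (∀ j, g ∉ A j) ∧ Indep i (insert g (A i)) := by
  simp [rrFeas]

noncomputable def rrStep (i : Fin n) (A : Fin n → Finset α) : Fin n → Finset α :=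
  if h : ∃ x ∈ rrFeas Indep i A, ∀ y ∈ rrFeas Indep i A,
      v i (insert y (A i)) ≤ v i (insert x (A i)) then
    Function.update A i (insert h.choose (A i))
  else A

lemma rrStep_cases (i : Fin n) (A : Fin n → Finset α) :
    (rrFeas Indep i A = ∅ ∧ rrStep v Indep i A = A) ∨
    ∃ x ∈ rrFeas Indep i A,
      (∀ y ∈ rrFeas Indep i A, v i (insert y (A i)) ≤ v i (insert x (A i))) ∧
      rrStep v Indep i A = Function.update A i (insert x (A i)) := by
  unfold rrStep
  split_ifs with h
  · right
    obtain ⟨hx, hmax⟩ := h.choose_spec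
    exact ⟨h.choose, hx, hmax, rfl⟩
  · left
    refine ⟨?_, rfl⟩
    by_contra hne
    obtain ⟨x, hx, hmax⟩ := Finset.exists_max_image (rrFeas Indep i A)
      (fun g => v i (insert g (A i))) (Finset.nonempty_iff_ne_empty.2 hne)
    exact h ⟨x, hx, hmax⟩

variable (hn : 0 < n)

noncomputable def rrAlloc : ℕ → Fin n → Finset α
  | 0 => fun _ => ∅
  | (τ+1) => rrStep v Indep ⟨τ % n, Nat.mod_lt τ hn⟩ (rrAlloc τ)

lemma rrAlloc_succ_cases (τ : ℕ) :
    (rrFeas Indep ⟨τ % n, Nat.mod_lt τ hn⟩ (rrAlloc v Indep hn τ) = ∅ ∧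
      rrAlloc v Indep hn (τ+1) = rrAlloc v Indep hn τ) ∨
    ∃ x ∈ rrFeas Indep ⟨τ % n, Nat.mod_lt τ hn⟩ (rrAlloc v Indep hn τ),
      (∀ y ∈ rrFeas Indep ⟨τ % n, Nat.mod_lt τ hn⟩ (rrAlloc v Indep hn τ),
        v ⟨τ % n, Nat.mod_lt τ hn⟩ (insert y (rrAlloc v Indep hn τ ⟨τ % n, Nat.mod_lt τ hn⟩)) ≤
        v ⟨τ % n, Nat.mod_lt τ hn⟩ (insert x (rrAlloc v Indep hn τ ⟨τ % n, Nat.mod_lt τ hn⟩))) ∧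
      rrAlloc v Indep hn (τ+1) = Function.update (rrAlloc v Indep hn τ) ⟨τ % n, Nat.mod_lt τ hn⟩
        (insert x (rrAlloc v Indep hn τ ⟨τ % n, Nat.mod_lt τ hn⟩)) := by
  have : rrAlloc v Indep hn (τ+1) = rrStep v Indep ⟨τ % n, Nat.mod_lt τ hn⟩ (rrAlloc v Indep hn τ) := rfl
  rw [this]
  exact rrStep_cases v Indep _ _

lemma rrAlloc_subset_succ (τ : ℕ) (i : Fin n) :
    rrAlloc v Indep hn τ i ⊆ rrAlloc v Indep hn (τ+1) i := by
  rcases rrAlloc_succ_cases v Indep hn τ with ⟨_, h⟩ | ⟨x, _, _, h⟩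
  · rw [h]
  · rw [h]
    rcases eq_or_ne i ⟨τ % n, Nat.mod_lt τ hn⟩ with rfl | hne
    · rw [Function.update_self]; exact Finset.subset_insert _ _
    · rw [Function.update_of_ne hne]

lemma rrAlloc_mono {τ τ' : ℕ} (h : τ ≤ τ') (i : Fin n) :
    rrAlloc v Indep hn τ i ⊆ rrAlloc v Indep hn τ' i := by
  induction τ' with
  | zero =>
    have : τ = 0 := Nat.le_zero.mp h
    subst this; exact Finset.Subset.refl _
  | succ t ih =>
    rcases Nat.lt_or_ge τ (t+1) with h' | h'
    · exact (ih (Nat.lt_succ_iff.mp h')).trans (rrAlloc_subset_succ v Indep hn t i)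
    · have : τ = t + 1 := le_antisymm h h'
      subst this; exact Finset.Subset.refl _



lemma rrAlloc_succ_ne {τ : ℕ} {i : Fin n} (h : τ % n ≠ i.1) :
    rrAlloc v Indep hn (τ+1) i = rrAlloc v Indep hn τ i := by
  rcases rrAlloc_succ_cases v Indep hn τ with ⟨_, he⟩ | ⟨x, _, _, he⟩
  · rw [he]
  · rw [he, Function.update_of_ne]
    intro hc; rw [hc] at h; exact h rfl

lemma rrAlloc_indep (hem : ∀ i, Indep i ∅) (τ : ℕ) (i : Fin n) :
    Indep i (rrAlloc v Indep hn τ i) := by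
  induction τ with
  | zero => exact hem i
  | succ t ih =>
    rcases rrAlloc_succ_cases v Indep hn t with ⟨_, he⟩ | ⟨x, hx, _, he⟩
    · rw [he]; exact ih
    · rw [he]
      rcases eq_or_ne i ⟨t % n, Nat.mod_lt t hn⟩ with rfl | hne
      · rw [Function.update_self]
        exact ((mem_rrFeas Indep).1 hx).2
      · rw [Function.update_of_ne hne]; exact ih

lemma rrAlloc_disjoint (τ : ℕ) : ∀ i j : Fin n, i ≠ j →
    Disjoint (rrAlloc v Indep hn τ i) (rrAlloc v Indep hn τ j) := by
  induction τ with
  | zero => intro i j _; simp [rrAlloc]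
  | succ t ih =>
    rcases rrAlloc_succ_cases v Indep hn t with ⟨_, he⟩ | ⟨x, hx, _, he⟩
    · rw [he]; exact ih
    · intro i j hij
      have hxav := ((mem_rrFeas Indep).1 hx).1
      rw [he]
      set a : Fin n := ⟨t % n, Nat.mod_lt t hn⟩
      rcases eq_or_ne i a with rfl | hi
      · rw [Function.update_self, Function.update_of_ne hij.symm]
        rw [Finset.disjoint_insert_left]
        exact ⟨hxav j, ih _ _ hij⟩
      · rw [Function.update_of_ne hi]
        rcases eq_or_ne j a with rfl | hj
        · rw [Function.update_self, Finset.disjoint_insert_right]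
          exact ⟨hxav i, ih _ _ hij⟩
        · rw [Function.update_of_ne hj]; exact ih _ _ hij

lemma rrAlloc_early {τ : ℕ} {i : Fin n} (h : τ ≤ i.1) : rrAlloc v Indep hn τ i = ∅ := by
  induction τ with
  | zero => rfl
  | succ t ih =>
    have ht : t % n = t := Nat.mod_eq_of_lt (lt_of_lt_of_le (Nat.lt_succ_self t |>.trans_le h) i.2.le)
    rw [rrAlloc_succ_ne v Indep hn (by rw [ht]; omega)]
    exact ih (by omega)

lemma rrAlloc_const_of_no_turn {i : Fin n} (τ : ℕ) (d : ℕ)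
    (h : ∀ e < d, (τ + e) % n ≠ i.1) :
    rrAlloc v Indep hn (τ + d) i = rrAlloc v Indep hn τ i := by
  induction d with
  | zero => rfl
  | succ e ih =>
    rw [show τ + (e+1) = (τ + e) + 1 by ring,
      rrAlloc_succ_ne v Indep hn (h e (Nat.lt_succ_self e))]
    exact ih (fun e' he' => h e' (he'.trans (Nat.lt_succ_self e)))

/-- state of agent i before its (t+1)-st turn -/
noncomputable def rrN (i : Fin n) (t : ℕ) : Finset α := rrAlloc v Indep hn (i.1 + t * n) i

lemma rrN_zero (i : Fin n) : rrN v Indep hn i 0 = ∅ :=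
  rrAlloc_early v Indep hn (by simp)

lemma rrN_mono {i : Fin n} {t t' : ℕ} (h : t ≤ t') : rrN v Indep hn i t ⊆ rrN v Indep hn i t' :=
  rrAlloc_mono v Indep hn (by have := Nat.mul_le_mul_right n h; omega) i

lemma rrN_succ_state (i : Fin n) (t : ℕ) :
    rrN v Indep hn i (t+1) = rrAlloc v Indep hn (i.1 + t * n + 1) i := by
  have hi := i.2
  have key : ∀ e < n - 1, (i.1 + t * n + 1 + e) % n ≠ i.1 := by
    intro e he
    rw [show i.1 + t * n + 1 + e = (i.1 + 1 + e) + t * n by ring, Nat.add_mul_mod_self_right]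
    rcases Nat.lt_or_ge (i.1 + 1 + e) n with h' | h'
    · rw [Nat.mod_eq_of_lt h']; omega
    · rw [Nat.mod_eq_sub_mod h', Nat.mod_eq_of_lt (by omega)]; omega
  have := rrAlloc_const_of_no_turn v Indep hn (i.1 + t * n + 1) (n-1) key
  rw [show i.1 + t * n + 1 + (n-1) = i.1 + (t+1) * n by have := hn; ring_nf; omega] at this
  exact this

lemma rrTurn_mod (i : Fin n) (t : ℕ) : (i.1 + t * n) % n = i.1 := by
  rw [Nat.add_mul_mod_self_right, Nat.mod_eq_of_lt i.2]

lemma rrRound_cases (i : Fin n) (t : ℕ) :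
    (rrFeas Indep i (rrAlloc v Indep hn (i.1 + t * n)) = ∅ ∧
      rrN v Indep hn i (t+1) = rrN v Indep hn i t) ∨
    ∃ x ∈ rrFeas Indep i (rrAlloc v Indep hn (i.1 + t * n)),
      (∀ y ∈ rrFeas Indep i (rrAlloc v Indep hn (i.1 + t * n)),
        v i (insert y (rrN v Indep hn i t)) ≤ v i (insert x (rrN v Indep hn i t))) ∧
      rrN v Indep hn i (t+1) = insert x (rrN v Indep hn i t) ∧ x ∉ rrN v Indep hn i t := by
  have hact : (⟨(i.1 + t * n) % n, Nat.mod_lt _ hn⟩ : Fin n) = i := by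
    apply Fin.ext; exact rrTurn_mod i t
  rcases rrAlloc_succ_cases v Indep hn (i.1 + t * n) with ⟨hf, he⟩ | ⟨x, hx, hmax, he⟩
  · left
    rw [hact] at hf
    refine ⟨hf, ?_⟩
    rw [rrN_succ_state, he]; rfl
  · right
    rw [hact] at hx hmax he
    refine ⟨x, hx, hmax, ?_, ((mem_rrFeas Indep).1 hx).1 i⟩
    rw [rrN_succ_state, he, Function.update_self]; rfl

lemma rrN_card_le (i : Fin n) (t : ℕ) : (rrN v Indep hn i t).card ≤ t := by
  induction t with
  | zero => simp [rrN_zero]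
  | succ t ih =>
    rcases rrRound_cases v Indep hn i t with ⟨_, he⟩ | ⟨x, _, _, he, hx⟩
    · rw [he]; omega
    · rw [he, Finset.card_insert_of_notMem hx]; omega

lemma rrN_card_eq (i : Fin n) (t : ℕ)
    (h : ∀ r < t, rrFeas Indep i (rrAlloc v Indep hn (i.1 + r * n)) ≠ ∅) :
    (rrN v Indep hn i t).card = t := by
  induction t with
  | zero => simp [rrN_zero]
  | succ t ih =>
    rcases rrRound_cases v Indep hn i t with ⟨hf, _⟩ | ⟨x, _, _, he, hx⟩
    · exact absurd hf (h t (Nat.lt_succ_self t))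
    · rw [he, Finset.card_insert_of_notMem hx,
        ih (fun r hr => h r (hr.trans (Nat.lt_succ_self t)))]

lemma rrPass_exists (i : Fin n) :
    ∃ r, rrFeas Indep i (rrAlloc v Indep hn (i.1 + r * n)) = ∅ := by
  by_contra h
  push_neg at h
  have := rrN_card_eq v Indep hn i (Fintype.card α + 1) (fun r _ => (h r).ne_empty)
  have hle : (rrN v Indep hn i (Fintype.card α + 1)).card ≤ Fintype.card α :=
    Finset.card_le_card (Finset.subset_univ _) |>.trans (by simp)
  omega

open Classical in
noncomputable def rrK (i : Fin n) : ℕ := Nat.find (rrPass_exists v Indep hn i)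

lemma rrK_spec (i : Fin n) :
    rrFeas Indep i (rrAlloc v Indep hn (i.1 + rrK v Indep hn i * n)) = ∅ := by
  classical exact Nat.find_spec (rrPass_exists v Indep hn i)

lemma rrK_min {i : Fin n} {r : ℕ} (h : r < rrK v Indep hn i) :
    rrFeas Indep i (rrAlloc v Indep hn (i.1 + r * n)) ≠ ∅ := by
  classical exact Nat.find_min (rrPass_exists v Indep hn i) h

lemma rrN_card_K {i : Fin n} {t : ℕ} (h : t ≤ rrK v Indep hn i) :
    (rrN v Indep hn i t).card = t :=
  rrN_card_eq v Indep hn i t (fun r hr => rrK_min v Indep hn (lt_of_lt_of_le hr h))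

lemma rrK_le (i : Fin n) : rrK v Indep hn i ≤ Fintype.card α := by
  have := rrN_card_K v Indep hn (le_refl (rrK v Indep hn i))
  have hle : (rrN v Indep hn i (rrK v Indep hn i)).card ≤ Fintype.card α :=
    Finset.card_le_card (Finset.subset_univ _) |>.trans (by simp)
  omega

lemma rrPerm {i : Fin n} {τ0 : ℕ}
    (h : rrFeas Indep i (rrAlloc v Indep hn τ0) = ∅) (d : ℕ) :
    rrAlloc v Indep hn (τ0 + d) i = rrAlloc v Indep hn τ0 i ∧
    ∀ g, (∀ j, g ∉ rrAlloc v Indep hn (τ0 + d) j) →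
      ¬ Indep i (insert g (rrAlloc v Indep hn τ0 i)) := by
  induction d with
  | zero =>
    refine ⟨rfl, fun g hg hind => ?_⟩
    have : g ∈ rrFeas Indep i (rrAlloc v Indep hn τ0) :=
      (mem_rrFeas Indep).2 ⟨hg, hind⟩
    rw [h] at this
    exact absurd this (Finset.notMem_empty g)
  | succ d ih =>
    have h2 : ∀ g, (∀ j, g ∉ rrAlloc v Indep hn (τ0 + (d+1)) j) →
        ¬ Indep i (insert g (rrAlloc v Indep hn τ0 i)) := by
      intro g hg
      refine ih.2 g (fun j hj => hg j ?_)
      exact rrAlloc_mono v Indep hn (by omega) j hj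
    refine ⟨?_, h2⟩
    rw [show τ0 + (d+1) = (τ0 + d) + 1 by ring]
    rcases rrAlloc_succ_cases v Indep hn (τ0 + d) with ⟨_, he⟩ | ⟨x, hx, _, he⟩
    · rw [he]; exact ih.1
    · set a : Fin n := ⟨(τ0 + d) % n, Nat.mod_lt _ hn⟩
      rcases eq_or_ne a i with rfl | hne
      · exfalso
        obtain ⟨hav, hind⟩ := (mem_rrFeas Indep).1 hx
        rw [ih.1] at hind
        exact ih.2 x hav hind
      · rw [he, Function.update_of_ne (Ne.symm hne)]; exact ih.1

noncomputable def rrT : ℕ := n * (Fintype.card α + 1)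

noncomputable def rrFin (i : Fin n) : Finset α := rrAlloc v Indep hn (rrT (α := α) (n := n)) i

lemma rrFin_eq (i : Fin n) : rrFin v Indep hn i = rrN v Indep hn i (rrK v Indep hn i) := by
  have h1 : i.1 + rrK v Indep hn i * n ≤ rrT (α := α) (n := n) := by
    have := rrK_le v Indep hn i
    have hi := i.2
    unfold rrT
    nlinarith
  have := (rrPerm v Indep hn (rrK_spec v Indep hn i)
    (rrT (α := α) (n := n) - (i.1 + rrK v Indep hn i * n))).1
  rw [show i.1 + rrK v Indep hn i * n + (rrT (α := α) (n := n) - (i.1 + rrK v Indep hn i * n))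
    = rrT (α := α) (n := n) by omega] at this
  exact this

lemma rrFin_terminal (g : α) (hg : ∀ j, g ∉ rrFin v Indep hn j) (i : Fin n) :
    ¬ Indep i (insert g (rrFin v Indep hn i)) := by
  have h1 : i.1 + rrK v Indep hn i * n ≤ rrT (α := α) (n := n) := by
    have := rrK_le v Indep hn i
    have hi := i.2
    unfold rrT
    nlinarith
  have := (rrPerm v Indep hn (rrK_spec v Indep hn i)
    (rrT (α := α) (n := n) - (i.1 + rrK v Indep hn i * n))).2 g
  rw [show i.1 + rrK v Indep hn i * n + (rrT (α := α) (n := n) - (i.1 + rrK v Indep hn i * n))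
    = rrT (α := α) (n := n) by omega] at this
  rw [rrFin_eq]
  exact this hg

end RR

section Helpers

variable {α : Type*} [DecidableEq α]

lemma submod_expand {f : Finset α → ℝ} (hf : Submodular f) (T W : Finset α) (hW : W ⊆ T)
    (E : Finset α) (hE : ∀ c ∈ E, c ∉ T) :
    f (T ∪ E) ≤ f T + ∑ c ∈ E, (f (insert c W) - f W) := by
  induction E using Finset.induction_on with
  | empty => simp
  | @insert c E0 hc ih =>
    have hE0 : ∀ c' ∈ E0, c' ∉ T := fun c' h' => hE c' (Finset.mem_insert_of_mem h')
    have hcT : c ∉ T ∪ E0 := by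
      simp only [Finset.mem_union, not_or]
      exact ⟨hE c (Finset.mem_insert_self c E0), hc⟩
    have hsub : W ⊆ T ∪ E0 := hW.trans Finset.subset_union_left
    have key := hf hsub hcT
    have : T ∪ insert c E0 = insert c (T ∪ E0) := Finset.union_insert _ _ _
    rw [this, Finset.sum_insert hc]
    have := ih hE0
    linarith

lemma abel_bound (L : ℝ) (a d : ℕ → ℝ) (k : ℕ) (ha0 : a 0 = 0)
    (ha : ∀ t ≤ k, a t ≤ L * t) (hd0 : ∀ t < k, 0 ≤ d t)
    (hmono : ∀ t, t + 1 < k → d (t+1) ≤ d t) :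
    ∑ t ∈ Finset.range k, (a (t+1) - a t) * d t ≤ L * ∑ t ∈ Finset.range k, d t := by
  rcases Nat.eq_zero_or_pos k with rfl | hk
  · simp
  have aux : ∀ m, m + 1 ≤ k →
      ∑ t ∈ Finset.range (m+1), (a (t+1) - a t) * d t ≤
        L * ∑ t ∈ Finset.range (m+1), d t - (L * (m+1) - a (m+1)) * d m := by
    intro m
    induction m with
    | zero =>
      intro _
      simp only [Nat.zero_add, zero_add, Finset.sum_range_one, ha0, Nat.cast_zero]
      try push_cast
      try ring_nf
      try linarith
    | succ m ih =>
      intro hm1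
      have ihm := ih (by omega)
      rw [Finset.sum_range_succ, Finset.sum_range_succ (f := d)]
      have h1 : L * (m+1 : ℕ) - a (m+1) ≥ 0 := by
        have := ha (m+1) (by omega)
        linarith
      have h2 : d (m+1) ≤ d m := hmono m (by omega)
      have h3 : (L * (m+1 : ℕ) - a (m+1)) * d (m+1) ≤ (L * (m+1 : ℕ) - a (m+1)) * d m :=
        mul_le_mul_of_nonneg_left h2 h1
      try push_cast at ihm
      try push_cast at h1
      try push_cast at h3
      try push_cast
      nlinarith [ihm, h3]
  obtain ⟨m, rfl⟩ : ∃ m, k = m + 1 := ⟨k - 1, by omega⟩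
  have := aux m (le_refl _)
  have h1 : L * (m+1 : ℕ) - a (m+1) ≥ 0 := by
    have := ha (m+1) (by omega)
    linarith
  have h2 : 0 ≤ d m := hd0 m (by omega)
  push_cast at h1 this
  nlinarith [mul_nonneg h1 h2]

lemma exists_basis_superset (Indep : Finset α → Prop)
    (hdown : ∀ ⦃X Y : Finset α⦄, X ⊆ Y → Indep Y → Indep X)
    (S : Finset α) :
    ∀ (X : Finset α), X ⊆ S → Indep X → ∃ B, X ⊆ B ∧ IsBasisIn Indep S B := by
  have main : ∀ m (X : Finset α), X ⊆ S → Indep X → S.card - X.card ≤ m →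
      ∃ B, X ⊆ B ∧ IsBasisIn Indep S B := by
    intro m
    induction m with
    | zero =>
      intro X hXS hX hm
      have : X = S := Finset.eq_of_subset_of_card_le hXS (by omega)
      subst this
      exact ⟨X, Finset.Subset.refl X, hXS, hX, fun x hx hnx _ => hnx hx⟩
    | succ m ih =>
      intro X hXS hX hm
      by_cases h : ∃ x ∈ S, x ∉ X ∧ Indep (insert x X)
      · obtain ⟨x, hxS, hxX, hind⟩ := h
        have hsub : insert x X ⊆ S := Finset.insert_subset hxS hXS
        have hcard : (insert x X).card = X.card + 1 := Finset.card_insert_of_notMem hxX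
        have hlt : X.card < S.card := Finset.card_lt_card (Finset.ssubset_iff_of_subset hXS |>.2 ⟨x, hxS, hxX⟩)
        obtain ⟨B, hB1, hB2⟩ := ih (insert x X) hsub hind (by omega)
        exact ⟨B, (Finset.subset_insert x X).trans hB1, hB2⟩
      · push_neg at h
        exact ⟨X, Finset.Subset.refl X, hXS, hX, h⟩
  exact fun X hXS hX => main (S.card - X.card) X hXS hX (le_refl _)

end Helpers


/-- Corollary 7.1: for `n` agents with normalized monotone submodular valuations `v i` and
`p i`-system constraints `Indep i` over a finite set of goods, there exists an allocation
`A 0, …, A (n−1)` of pairwise disjoint feasible sets such that (1) for every pair of agents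
`i, j`: if `A j` is nonempty there is some `g ∈ A j` with
`v i (A i) ≥ (1/(p i + 2)) · v i B` for every feasible `B ⊆ A j \ {g}`, and if `A j = ∅` then
`v i (A i) ≥ (1/(p i + 2)) · v i B` for every feasible `B ⊆ A j`; and (2) adding any unallocated
good to any agent's set is infeasible. -/
theorem stmt_18 {α : Type*} [DecidableEq α] [Fintype α] (n : ℕ)
    (v : Fin n → Finset α → ℝ) (Indep : Fin n → Finset α → Prop) (p : Fin n → ℝ)
    (hp : ∀ i, 1 ≤ p i)
    (hnorm : ∀ i, v i ∅ = 0)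
    (hmono : ∀ i, ∀ ⦃S T : Finset α⦄, S ⊆ T → v i S ≤ v i T)
    (hsub : ∀ i, Submodular (v i))
    (hempty : ∀ i, Indep i ∅)
    (hdown : ∀ i, ∀ ⦃X Y : Finset α⦄, X ⊆ Y → Indep i Y → Indep i X)
    (hPsys : ∀ i, ∀ S A B : Finset α, IsBasisIn (Indep i) S A → IsBasisIn (Indep i) S B →
      (B.card : ℝ) ≤ p i * (A.card : ℝ)) :
    ∃ A : Fin n → Finset α,
      (∀ i j, i ≠ j → Disjoint (A i) (A j)) ∧
      (∀ i, Indep i (A i)) ∧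
      (∀ i j : Fin n,
        ((A j).Nonempty → ∃ g ∈ A j, ∀ B ⊆ (A j).erase g, Indep i B →
          (1 / (p i + 2)) * v i B ≤ v i (A i)) ∧
        (A j = ∅ → ∀ B ⊆ A j, Indep i B → (1 / (p i + 2)) * v i B ≤ v i (A i))) ∧
      (∀ g : α, (∀ i, g ∉ A i) → ∀ i, ¬ Indep i (insert g (A i))) := by
  rcases Nat.eq_zero_or_pos n with rfl | hn
  · exact ⟨fun _ => ∅, fun i => i.elim0, fun i => i.elim0, fun i => i.elim0,
      fun g _ i => i.elim0⟩
  classical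
  refine ⟨rrFin v Indep hn, fun i j hij => rrAlloc_disjoint v Indep hn _ i j hij,
    fun i => rrAlloc_indep v Indep hn hempty _ i, ?_, fun g hg i => rrFin_terminal v Indep hn g hg i⟩
  intro i j
  have hvnonneg : ∀ (X : Finset α), 0 ≤ v i X := by
    intro X
    have := hmono i (Finset.empty_subset X)
    rwa [hnorm i] at this
  have hpos : (0:ℝ) < p i + 2 := by linarith [hp i]
  constructor
  · -- nonempty clause
    intro hne
    rcases eq_or_ne i j with rfl | hij
    · -- trivial diagonal case
      obtain ⟨g, hg⟩ := hne
      refine ⟨g, hg, ?_⟩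
      intro B hB hBind
      have h1 : v i B ≤ v i (rrFin v Indep hn i) :=
        hmono i (hB.trans (Finset.erase_subset _ _))
      have h2 : 1/(p i + 2) ≤ 1 := by
        rw [div_le_one hpos]; linarith [hp i]
      nlinarith [hvnonneg B]
    · -- main case i ≠ j
      have hkj : 0 < rrK v Indep hn j := by
        by_contra h
        have h0 : rrK v Indep hn j = 0 := by omega
        have := rrFin_eq v Indep hn j
        rw [h0, rrN_zero] at this
        exact hne.ne_empty this
      obtain ⟨g, hgfeas, hgmax, hgN, hgnot⟩ :
          ∃ x ∈ rrFeas Indep j (rrAlloc v Indep hn (j.1 + 0 * n)),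
            (∀ y ∈ rrFeas Indep j (rrAlloc v Indep hn (j.1 + 0 * n)),
              v j (insert y (rrN v Indep hn j 0)) ≤ v j (insert x (rrN v Indep hn j 0))) ∧
            rrN v Indep hn j 1 = insert x (rrN v Indep hn j 0) ∧ x ∉ rrN v Indep hn j 0 := by
        rcases rrRound_cases v Indep hn j 0 with ⟨hf, _⟩ | h
        · exact absurd hf (rrK_min v Indep hn hkj)
        · exact h
      have hNj1 : rrN v Indep hn j 1 = {g} := by rw [hgN, rrN_zero]; rfl
      have hgAj : g ∈ rrFin v Indep hn j := by
        rw [rrFin_eq]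
        exact rrN_mono v Indep hn hkj (by rw [hNj1]; exact Finset.mem_singleton_self g)
      refine ⟨g, hgAj, ?_⟩
      intro B hB hBind
      rcases Finset.eq_empty_or_nonempty B with rfl | hBne
      · rw [hnorm i, mul_zero]; exact hvnonneg _
      -- abbreviations
      set k := rrK v Indep hn i with hk
      set P : ℕ → Finset α := fun t => B.filter
        (fun c => ¬ Indep i (insert c (rrN v Indep hn i t)) ∨ c ∈ rrN v Indep hn j (t+1))
        with hPdef
      set δ : ℕ → ℝ := fun t => v i (rrN v Indep hn i (t+1)) - v i (rrN v Indep hn i t)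
        with hδdef
      have hcB : ∀ c ∈ B, c ∈ rrFin v Indep hn j ∧ c ≠ g := fun c hc =>
        ⟨Finset.mem_of_mem_erase (hB hc), Finset.ne_of_mem_erase (hB hc)⟩
      have hBdisj : ∀ c ∈ B, c ∉ rrFin v Indep hn i := by
        intro c hc hcA
        exact Finset.disjoint_left.1
          (rrAlloc_disjoint v Indep hn _ i j hij) hcA (hcB c hc).1
      have hAi : rrFin v Indep hn i = rrN v Indep hn i k := rrFin_eq v Indep hn i
      have hT : ∀ t : ℕ, t ≤ Fintype.card α → i.1 + t * n ≤ rrT (α := α) (n := n) := by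
        intro t ht
        have h1 : t * n ≤ Fintype.card α * n := Nat.mul_le_mul_right n ht
        have h2 : rrT (α := α) (n := n) = n * (Fintype.card α + 1) := rfl
        have hi := i.2
        nlinarith
      have hkcard := rrK_le v Indep hn i
      -- availability
      have hav : ∀ t, t ≤ k → ∀ c ∈ B, c ∉ rrN v Indep hn j (t+1) →
          ∀ j', c ∉ rrAlloc v Indep hn (i.1 + t * n) j' := by
        intro t ht c hc hcN j' hmem
        rcases eq_or_ne j' j with rfl | hj'
        · refine hcN (rrAlloc_mono v Indep hn ?_ j' hmem)
          have hi := i.2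
          have : (t+1) * n = t * n + n := by ring
          omega
        · have h2 : c ∈ rrFin v Indep hn j' :=
            rrAlloc_mono v Indep hn (hT t (ht.trans hkcard)) j' hmem
          exact Finset.disjoint_left.1
            (rrAlloc_disjoint v Indep hn _ j' j hj') h2 (hcB c hc).1
      -- basic P facts
      have hPsubB : ∀ t, P t ⊆ B := fun t => Finset.filter_subset _ _
      have hP0 : P 0 = ∅ := by
        rw [hPdef]
        simp only [Finset.filter_eq_empty_iff]
        intro c hc
        push_neg
        constructor
        · rw [rrN_zero]
          exact hdown i (by simpa using hc) hBind
        · rw [hNj1]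
          simp only [Finset.mem_singleton]
          exact (hcB c hc).2
      have hPmono : ∀ ⦃t t'⦄, t ≤ t' → P t ⊆ P t' := by
        intro t t' htt' c hc
        rw [hPdef] at hc ⊢
        simp only [Finset.mem_filter] at hc ⊢
        refine ⟨hc.1, ?_⟩
        rcases hc.2 with h | h
        · left
          intro hind
          exact h (hdown i (Finset.insert_subset_insert c (rrN_mono v Indep hn htt')) hind)
        · right
          exact rrN_mono v Indep hn (by omega) h
      have hPk : P k = B := by
        rw [hPdef]
        rw [Finset.filter_eq_self]
        intro c hc
        by_cases hcN : c ∈ rrN v Indep hn j (k+1)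
        · right; exact hcN
        · left
          intro hind
          have hmem : c ∈ rrFeas Indep i (rrAlloc v Indep hn (i.1 + k * n)) :=
            (mem_rrFeas Indep).2 ⟨fun j' => hav k (le_refl k) c hc hcN j', hind⟩
          rw [rrK_spec v Indep hn i] at hmem
          exact absurd hmem (Finset.notMem_empty c)
      -- cardinality bound
      have hcardP : ∀ t, t ≤ k → ((P t).card : ℝ) ≤ (p i + 1) * t := by
        intro t ht
        set C := B.filter (fun c => ¬ Indep i (insert c (rrN v Indep hn i t))) with hC
        set D := B.filter (fun c => c ∈ rrN v Indep hn j (t+1)) with hD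
        have hPt : P t = C ∪ D := by
          ext c
          simp only [hPdef, hC, hD, Finset.mem_filter, Finset.mem_union]
          tauto
        have hCbound : ((C).card : ℝ) ≤ p i * t := by
          have hSind : Indep i (rrN v Indep hn i t) := rrAlloc_indep v Indep hn hempty _ i
          have hSbasis : IsBasisIn (Indep i) (rrN v Indep hn i t ∪ C) (rrN v Indep hn i t) := by
            refine ⟨Finset.subset_union_left, hSind, ?_⟩
            intro x hx hnx
            rcases Finset.mem_union.1 hx with h | h
            · exact absurd h hnx
            · exact (Finset.mem_filter.1 h).2
          have hCind : Indep i C := hdown i (Finset.filter_subset _ _) hBind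
          obtain ⟨B', hCB', hB'basis⟩ := exists_basis_superset (Indep i) (hdown i)
            (rrN v Indep hn i t ∪ C) C Finset.subset_union_right hCind
          have hps := hPsys i (rrN v Indep hn i t ∪ C) (rrN v Indep hn i t) B' hSbasis hB'basis
          have hc1 : (C.card : ℝ) ≤ (B'.card : ℝ) := by
            exact_mod_cast Finset.card_le_card hCB'
          rw [rrN_card_K v Indep hn ht] at hps
          linarith
        have hDbound : (D.card : ℝ) ≤ t := by
          have hsub : D ⊆ (rrN v Indep hn j (t+1)).erase g := by
            intro c hc
            have := Finset.mem_filter.1 hc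
            exact Finset.mem_erase.2 ⟨(hcB c this.1).2, this.2⟩
          have hgmem : g ∈ rrN v Indep hn j (t+1) :=
            rrN_mono v Indep hn (Nat.succ_le_succ (Nat.zero_le t))
              (by rw [hNj1]; exact Finset.mem_singleton_self g)
          have h1 : D.card ≤ (rrN v Indep hn j (t+1)).card - 1 := by
            have := Finset.card_le_card hsub
            rwa [Finset.card_erase_of_mem hgmem] at this
          have h2 := rrN_card_le v Indep hn j (t+1)
          have h3 : D.card ≤ t := by omega
          exact_mod_cast h3
        have := Finset.card_union_le C D
        rw [hPt]
        have hcast : ((C ∪ D).card : ℝ) ≤ (C.card : ℝ) + (D.card : ℝ) := by exact_mod_cast this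
        linarith
      -- greedy picks
      have hpick : ∀ t, t < k →
          ∃ x ∈ rrFeas Indep i (rrAlloc v Indep hn (i.1 + t * n)),
            (∀ y ∈ rrFeas Indep i (rrAlloc v Indep hn (i.1 + t * n)),
              v i (insert y (rrN v Indep hn i t)) ≤ v i (insert x (rrN v Indep hn i t))) ∧
            rrN v Indep hn i (t+1) = insert x (rrN v Indep hn i t) ∧ x ∉ rrN v Indep hn i t := by
        intro t htk
        rcases rrRound_cases v Indep hn i t with ⟨hf, _⟩ | h
        · exact absurd hf (rrK_min v Indep hn htk)
        · exact h
      have hgreedy : ∀ t, t < k → ∀ c ∈ B, c ∉ P t →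
          v i (insert c (rrN v Indep hn i t)) ≤ v i (rrN v Indep hn i (t+1)) := by
        intro t htk c hc hcP
        rw [hPdef] at hcP
        simp only [Finset.mem_filter, not_and, not_or, not_not] at hcP
        obtain ⟨hind, hcN⟩ := hcP hc
        obtain ⟨x, hxfeas, hxmax, hxeq, _⟩ := hpick t htk
        have hcfeas : c ∈ rrFeas Indep i (rrAlloc v Indep hn (i.1 + t * n)) :=
          (mem_rrFeas Indep).2 ⟨fun j' => hav t htk.le c hc hcN j', hind⟩
        have := hxmax c hcfeas
        rwa [← hxeq] at this
      have hδ0 : ∀ t, t < k → 0 ≤ δ t := by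
        intro t _
        rw [hδdef]
        simp only [sub_nonneg]
        exact hmono i (rrN_mono v Indep hn (by omega))
      have hδmono : ∀ t, t + 1 < k → δ (t+1) ≤ δ t := by
        intro t ht
        obtain ⟨x, hxfeas, _, hxeq, hxnot⟩ := hpick (t+1) ht
        obtain ⟨x0, _, hmax0, hx0eq, _⟩ := hpick t (by omega)
        have hxAi : x ∈ rrFin v Indep hn i := by
          rw [hAi]
          exact rrN_mono v Indep hn (by omega : t+2 ≤ k)
            (by rw [hxeq]; exact Finset.mem_insert_self _ _)
        have hxfeas0 : x ∈ rrFeas Indep i (rrAlloc v Indep hn (i.1 + t * n)) := by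
          refine (mem_rrFeas Indep).2 ⟨?_, ?_⟩
          · intro j' hmem
            rcases eq_or_ne j' i with heq | hj'
            · subst heq
              have hsb : rrAlloc v Indep hn (j'.1 + t * n) j' ⊆ rrN v Indep hn j' (t+1) := by
                apply rrAlloc_mono v Indep hn
                have : (t+1) * n = t * n + n := by ring
                omega
              exact hxnot (hsb hmem)
            · have h2 : x ∈ rrFin v Indep hn j' :=
                rrAlloc_mono v Indep hn (hT t (by omega)) j' hmem
              exact Finset.disjoint_left.1
                (rrAlloc_disjoint v Indep hn _ j' i hj') h2 hxAi
          · have hind2 : Indep i (rrN v Indep hn i (t+2)) :=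
              rrAlloc_indep v Indep hn hempty _ i
            rw [hxeq] at hind2
            exact hdown i
              (Finset.insert_subset_insert x (rrN_mono v Indep hn (by omega))) hind2
        have h1 : v i (insert x (rrN v Indep hn i t)) ≤ v i (rrN v Indep hn i (t+1)) := by
          have := hmax0 x hxfeas0
          rwa [← hx0eq] at this
        have h2 : v i (insert x (rrN v Indep hn i (t+1))) - v i (rrN v Indep hn i (t+1)) ≤
            v i (insert x (rrN v Indep hn i t)) - v i (rrN v Indep hn i t) :=
          hsub i (rrN_mono v Indep hn (by omega)) hxnot
        rw [hδdef]
        simp only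
        rw [show t + 1 + 1 = t + 2 by ring, hxeq]
        have h3 : rrN v Indep hn i (t+2) = insert x (rrN v Indep hn i (t+1)) := hxeq
        linarith
      -- B is covered at step k, k ≥ 1
      have hk1 : 1 ≤ k := by
        by_contra h
        have hk0 : k = 0 := by omega
        rw [hk0, hP0] at hPk
        exact hBne.ne_empty hPk.symm
      -- main chain
      have claim : ∀ t, t ≤ k → v i (rrN v Indep hn i k ∪ P t) ≤ v i (rrN v Indep hn i k) +
          ∑ t' ∈ Finset.range t, (((P (t'+1)).card : ℝ) - ((P t').card : ℝ)) * δ t' := by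
        intro t
        induction t with
        | zero =>
          intro _
          rw [hP0, Finset.union_empty]
          simp
        | succ t ih =>
          intro ht
          have hss : P t ⊆ P (t+1) := hPmono (Nat.le_succ t)
          have hsplit : rrN v Indep hn i k ∪ P (t+1) =
              (rrN v Indep hn i k ∪ P t) ∪ (P (t+1) \ P t) := by
            ext x
            simp only [Finset.mem_union, Finset.mem_sdiff]
            constructor
            · rintro (h | h)
              · exact Or.inl (Or.inl h)
              · by_cases hx : x ∈ P t
                · exact Or.inl (Or.inr hx)
                · exact Or.inr ⟨h, hx⟩
            · rintro ((h | h) | ⟨h, _⟩)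
              · exact Or.inl h
              · exact Or.inr (hss h)
              · exact Or.inr h
          have hWsub : rrN v Indep hn i t ⊆ rrN v Indep hn i k ∪ P t :=
            (rrN_mono v Indep hn (by omega)).trans Finset.subset_union_left
          have hEdisj : ∀ c ∈ P (t+1) \ P t, c ∉ rrN v Indep hn i k ∪ P t := by
            intro c hc
            have hc1 := Finset.mem_sdiff.1 hc
            simp only [Finset.mem_union, not_or]
            refine ⟨?_, hc1.2⟩
            intro hmem
            exact hBdisj c (hPsubB _ hc1.1) (by rwa [hAi])
          have hexp := submod_expand (hsub i) (rrN v Indep hn i k ∪ P t)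
            (rrN v Indep hn i t) hWsub (P (t+1) \ P t) hEdisj
          have hsumbound : ∑ c ∈ P (t+1) \ P t,
              (v i (insert c (rrN v Indep hn i t)) - v i (rrN v Indep hn i t)) ≤
              ((P (t+1) \ P t).card : ℝ) * δ t := by
            rw [← nsmul_eq_mul]
            apply Finset.sum_le_card_nsmul
            intro c hc
            have hc1 := Finset.mem_sdiff.1 hc
            have := hgreedy t (by omega) c (hPsubB _ hc1.1) hc1.2
            rw [hδdef]
            simp only
            linarith
          have hcardsd : ((P (t+1) \ P t).card : ℝ) =
              ((P (t+1)).card : ℝ) - ((P t).card : ℝ) := by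
            rw [Finset.card_sdiff_of_subset hss]
            have := Finset.card_le_card hss
            push_cast [Nat.cast_sub this]
            ring
          have ihh := ih (by omega)
          rw [Finset.sum_range_succ]
          rw [hsplit]
          rw [hcardsd] at hsumbound
          linarith
      have h2 := claim k (le_refl k)
      rw [hPk] at h2
      have h3 := abel_bound (p i + 1) (fun t => ((P t).card : ℝ)) δ k
        (by beta_reduce; rw [hP0]; simp) (fun t ht => hcardP t ht) hδ0 hδmono
      have h4 : ∑ t ∈ Finset.range k, δ t = v i (rrN v Indep hn i k) := by
        have := Finset.sum_range_sub (fun t => v i (rrN v Indep hn i t)) k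
        rw [hδdef]
        simp only at this ⊢
        rw [this, rrN_zero, hnorm i, sub_zero]
      have h1 : v i B ≤ v i (rrN v Indep hn i k ∪ B) := hmono i Finset.subset_union_right
      have hfinal : v i B ≤ (p i + 2) * v i (rrN v Indep hn i k) := by
        rw [h4] at h3
        nlinarith
      rw [hAi]
      rw [one_div, inv_mul_le_iff₀ hpos]
      linarith
  · -- empty clause
    intro hAj B hB hBind
    have : B = ∅ := Finset.subset_empty.mp (hAj ▸ hB)
    subst this
    rw [hnorm i, mul_zero]
    exact hvnonneg _
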